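/- Let a, b, c, d lie in positive order on the unit circle, with a + c ≠ 0, b + d ≠ 0 and ac ≠ bd, and set w2 := (ac(b+d) − bd(a+c))/(ac − bd). Let w ∈ ℂ with |w| < 1 satisfy |w − 2ac/(a+c)| = |a − 2ac/(a+c)| and |w − 2bd/(b+d)| = |b − 2bd/(b+d)| (w is the point of intersection of the hyperbolic lines J*[a,c] and J*[b,d]). Then w2 = 2w/(1 + |w|²), |w2| < 1, and w is the hyperbolic midpoint of the segment from 0 to w2: ρ(0,w) = ρ(w,w2) = ρ(0,w2)/2. -/

import Mathlib

open Complex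

/-- Points `a, b, c, d` lie in positive order on the unit circle. -/
def PosOrderOnCircle (a b c d : ℂ) : Prop :=
  ∃ θ₁ θ₂ θ₃ θ₄ : ℝ, θ₁ < θ₂ ∧ θ₂ < θ₃ ∧ θ₃ < θ₄ ∧ θ₄ < θ₁ + 2 * Real.pi ∧
    a = Complex.exp (θ₁ * Complex.I) ∧ b = Complex.exp (θ₂ * Complex.I) ∧
    c = Complex.exp (θ₃ * Complex.I) ∧ d = Complex.exp (θ₄ * Complex.I)

/-- The hyperbolic distance in the unit disk. -/
noncomputable def hypDist (x y : ℂ) : ℝ :=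
  2 * Real.arsinh (‖x - y‖ /
    Real.sqrt ((1 - ‖x‖ ^ 2) * (1 - ‖y‖ ^ 2)))

lemma conj_unit {a : ℂ} (ha : ‖a‖ = 1) : starRingEnd ℂ a = a⁻¹ := by
  have h : a * starRingEnd ℂ a = 1 := by
    rw [Complex.mul_conj]
    norm_cast
    rw [← Complex.sq_norm, ha]; norm_num
  exact eq_inv_of_mul_eq_one_right h

lemma circle_eq (a c w : ℂ) (ha : ‖a‖ = 1) (hc : ‖c‖ = 1)
    (hac : a + c ≠ 0)
    (h : ‖w - 2 * a * c / (a + c)‖ = ‖a - 2 * a * c / (a + c)‖) :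
    2 * (w + a * c * (starRingEnd ℂ w)) = (1 + w * starRingEnd ℂ w) * (a + c) := by
  have ha0 : a ≠ 0 := by intro h0; simp [h0] at ha
  have hc0 : c ≠ 0 := by intro h0; simp [h0] at hc
  have hck : starRingEnd ℂ (2 * a * c / (a + c)) = 2 / (a + c) := by
    rw [map_div₀, map_mul, map_mul, map_add, conj_unit ha, conj_unit hc, map_ofNat]
    rw [inv_add_inv ha0 hc0]
    field_simp
  have hns : Complex.normSq (w - 2 * a * c / (a + c)) = Complex.normSq (a - 2 * a * c / (a + c)) := by
    rw [← Complex.sq_norm, ← Complex.sq_norm, h]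
  have hmc : (w - 2 * a * c / (a + c)) * starRingEnd ℂ (w - 2 * a * c / (a + c))
      = (a - 2 * a * c / (a + c)) * starRingEnd ℂ (a - 2 * a * c / (a + c)) := by
    rw [Complex.mul_conj, Complex.mul_conj, hns]
  rw [map_sub, map_sub, hck, conj_unit ha] at hmc
  field_simp at hmc
  have hne : a * (a + c)^3 ≠ 0 := mul_ne_zero ha0 (pow_ne_zero _ hac)
  refine mul_left_cancel₀ hne ?_
  linear_combination -(a * (a + c) ^ 2) * hmc

/-- The intersection point `w` of the hyperbolic lines `J*[a,c]` and `J*[b,d]`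
satisfies `w2 = 2w/(1 + |w|²)` and is the hyperbolic midpoint of the segment from
`0` to `w2 = LIS[a,c,b,d]`. -/
theorem w_is_hyperbolic_midpoint (a b c d w : ℂ)
    (hord : PosOrderOnCircle a b c d)
    (hac : a + c ≠ 0) (hbd : b + d ≠ 0) (h2 : a * c ≠ b * d)
    (hw : ‖w‖ < 1)
    (hw1 : ‖w - 2 * a * c / (a + c)‖ = ‖a - 2 * a * c / (a + c)‖)
    (hw2 : ‖w - 2 * b * d / (b + d)‖ = ‖b - 2 * b * d / (b + d)‖) :
    let w2 := (a * c * (b + d) - b * d * (a + c)) / (a * c - b * d)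
    w2 = 2 * w / (((1 + ‖w‖ ^ 2 : ℝ)) : ℂ) ∧
    ‖w2‖ < 1 ∧
    hypDist 0 w = hypDist w w2 ∧ hypDist 0 w = hypDist 0 w2 / 2 := by
  intro w2
  obtain ⟨θ₁, θ₂, θ₃, θ₄, _, _, _, _, rfl, rfl, rfl, rfl⟩ := hord
  set a := Complex.exp (θ₁ * Complex.I) with hA
  set b := Complex.exp (θ₂ * Complex.I) with hB
  set c := Complex.exp (θ₃ * Complex.I) with hC
  set d := Complex.exp (θ₄ * Complex.I) with hD
  have ha : ‖a‖ = 1 := by simp [hA, Complex.norm_exp]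
  have hb : ‖b‖ = 1 := by simp [hB, Complex.norm_exp]
  have hc : ‖c‖ = 1 := by simp [hC, Complex.norm_exp]
  have hd : ‖d‖ = 1 := by simp [hD, Complex.norm_exp]
  have e1 := circle_eq a c w ha hc hac hw1
  have e2 := circle_eq b d w hb hd hbd hw2
  set r := ‖w‖ with hrdef
  have hr0 : 0 ≤ r := norm_nonneg w
  have hq : 0 < 1 - r ^ 2 := by nlinarith
  have hs : 0 < 1 + r ^ 2 := by positivity
  have hsC : ((1 + r ^ 2 : ℝ) : ℂ) ≠ 0 := by
    norm_cast
    exact ne_of_gt hs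
  have hwc : w * starRingEnd ℂ w = ((r : ℂ)) ^ 2 := by
    rw [Complex.mul_conj, ← Complex.sq_norm]
    push_cast
    ring
  have hsub : a * c - b * d ≠ 0 := sub_ne_zero.mpr h2
  -- main algebraic identity
  have h1s : (1 : ℂ) + (r : ℂ) ^ 2 ≠ 0 := by
    have := hsC; push_cast at this; exact this
  have hmain : w2 = 2 * w / (((1 + r ^ 2 : ℝ)) : ℂ) := by
    show (a * c * (b + d) - b * d * (a + c)) / (a * c - b * d) = _
    rw [div_eq_div_iff hsub hsC]
    push_cast
    linear_combination b * d * e1 - a * c * e2 + (b * d * (a + c) - a * c * (b + d)) * hwc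
  have habs2 : ‖w2‖ = 2 * r / (1 + r ^ 2) := by
    rw [hmain, norm_div, norm_mul, Complex.norm_real, Real.norm_eq_abs, Complex.norm_two,
      abs_of_pos hs]
  have h6 : 1 - (2 * r / (1 + r ^ 2)) ^ 2 = ((1 - r ^ 2) / (1 + r ^ 2)) ^ 2 := by
    field_simp
    ring
  have ht : (1 - r ^ 2) / (1 + r ^ 2) ≠ 0 := by positivity
  have hsq : Real.sqrt ((1 - r ^ 2) * ((1 - r ^ 2) / (1 + r ^ 2)) ^ 2)
      = Real.sqrt (1 - r ^ 2) * ((1 - r ^ 2) / (1 + r ^ 2)) := by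
    rw [Real.sqrt_mul hq.le, Real.sqrt_sq (by positivity)]
  refine ⟨hmain, ?_, ?_, ?_⟩
  · rw [habs2, div_lt_one hs]; nlinarith
  · -- hypDist 0 w = hypDist w w2
    have h5 : w - w2 = w * (((r ^ 2 - 1) / (1 + r ^ 2) : ℝ) : ℂ) := by
      rw [hmain]
      push_cast
      field_simp
      ring
    have habsd : ‖w - w2‖ = r * ((1 - r ^ 2) / (1 + r ^ 2)) := by
      rw [h5, norm_mul, Complex.norm_real, Real.norm_eq_abs, abs_div, abs_of_pos hs,
        abs_of_neg (by nlinarith : r ^ 2 - 1 < 0)]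
      ring
    unfold hypDist
    simp only [zero_sub, norm_neg, norm_zero, ← hrdef, habsd, habs2, h6]
    norm_num
    rw [hsq, mul_comm (Real.sqrt (1 - r ^ 2)), mul_comm r ((1 - r ^ 2) / (1 + r ^ 2)), mul_div_mul_left _ _ ht]
  · -- hypDist 0 w = hypDist 0 w2 / 2
    unfold hypDist
    simp only [zero_sub, norm_neg, norm_zero, ← hrdef, habs2, h6]
    norm_num
    rw [Real.sqrt_sq (by positivity : (0:ℝ) ≤ (1 - r ^ 2) / (1 + r ^ 2))]
    have harg : 2 * r / (1 + r ^ 2) / ((1 - r ^ 2) / (1 + r ^ 2)) = 2 * r / (1 - r ^ 2) := by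
      rw [div_div_div_eq]
      field_simp
    have hsq2 : Real.sqrt (1 - r ^ 2) * Real.sqrt (1 - r ^ 2) = 1 - r ^ 2 :=
      Real.mul_self_sqrt hq.le
    have hsqpos : 0 < Real.sqrt (1 - r ^ 2) := Real.sqrt_pos.mpr hq
    have key : Real.arsinh (2 * r / (1 - r ^ 2)) = 2 * Real.arsinh (r / Real.sqrt (1 - r ^ 2)) := by
      rw [← Real.arsinh_sinh (2 * Real.arsinh (r / Real.sqrt (1 - r ^ 2)))]
      congr 1
      rw [Real.sinh_two_mul, Real.sinh_arsinh, Real.cosh_arsinh]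
      rw [div_pow, Real.sq_sqrt hq.le]
      have h7 : 1 + r ^ 2 / (1 - r ^ 2) = 1 / (1 - r ^ 2) := by field_simp; ring
      rw [h7, one_div, Real.sqrt_inv]
      have hsqne : Real.sqrt (1 - r ^ 2) ≠ 0 := ne_of_gt hsqpos
      field_simp
      rw [Real.sq_sqrt hq.le]
    rw [harg, key]
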